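/- (Lemma 4.13 ii), optimality of the bound for p > 2.) Let p > 2, s ≥ 1, and f(X) := X^{1+2p^s} − X^{2+p^s}. Then S(f) = {y ∈ k : y^{p^s} = y} (the finite field 𝔽_{p^s} inside k), so |S(f)| = p^s and the bound |G_{∞,1}(f)| ≤ p^{s+1} of Lemma 4.13 is attained. -/

import Mathlib

open Polynomial

/-- `S(f)`: the set of `y ∈ k` such that `f(X+y) - f(X) - f(y) = P(X) - P(X)^p`
for some polynomial `P` with `P(0) = 0`. -/
def Sf (p : ℕ) {k : Type*} [Field k] (f : k[X]) : Set k :=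
  {y | ∃ P : k[X], P.coeff 0 = 0 ∧
    f.comp (X + C y) - f - C (f.eval y) = P - P ^ p}

section Aux

variable {k : Type*} [Field k] {p : ℕ} [hp : Fact p.Prime] [CharP k p]

/-- Coefficients of a `p`-th power of a polynomial in characteristic `p`. -/
lemma coeff_pow_char_eq (P : k[X]) (n : ℕ) :
    (P ^ p).coeff n = if p ∣ n then (P.coeff (n / p)) ^ p else 0 := by
  rw [← map_frobenius_expand (p := p) (f := P), coeff_map, coeff_expand hp.out.pos,
    apply_ite (frobenius k p)]
  simp [frobenius_def, zero_pow hp.out.ne_zero]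

/-- If `p ∤ m` and all the coefficients of `P - P^p` at `m * p^t`, `t ≥ 1`, vanish,
then the coefficient at `m` vanishes as well (the "reduction chain" argument). -/
lemma coeff_sub_pow_char_eq_zero (P : k[X]) (m : ℕ) (hm : ¬ p ∣ m)
    (hhigh : ∀ t, 1 ≤ t → (P - P ^ p).coeff (m * p ^ t) = 0) :
    (P - P ^ p).coeff m = 0 := by
  have hm0 : m ≠ 0 := by rintro rfl; exact hm (dvd_zero p)
  have key : ∀ t, P.coeff (m * p ^ t) = P.coeff m ^ p ^ t := by
    intro t
    induction t with
    | zero => simp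
    | succ t ih =>
      have h := hhigh (t + 1) (Nat.le_add_left 1 t)
      rw [coeff_sub, coeff_pow_char_eq,
        if_pos ⟨m * p ^ t, by ring⟩, sub_eq_zero] at h
      have hdiv : m * p ^ (t + 1) / p = m * p ^ t := by
        rw [pow_succ, ← mul_assoc, Nat.mul_div_cancel _ hp.out.pos]
      rw [h, hdiv, ih, ← pow_mul, ← pow_succ]
  set T := P.natDegree + 1 with hT
  have hbig : P.natDegree < m * p ^ T := by
    calc P.natDegree < p ^ T := by
          calc P.natDegree < T := Nat.lt_succ_self _
            _ ≤ p ^ T := Nat.le_of_lt (Nat.lt_pow_self hp.out.one_lt)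
      _ ≤ m * p ^ T := Nat.le_mul_of_pos_left _ (Nat.pos_of_ne_zero hm0)
  have h0 : P.coeff m ^ p ^ T = 0 := by
    rw [← key]; exact coeff_eq_zero_of_natDegree_lt hbig
  have hc : P.coeff m = 0 :=
    pow_eq_zero_iff (pow_ne_zero T hp.out.ne_zero) |>.mp h0
  rw [coeff_sub, coeff_pow_char_eq, if_neg hm, hc, sub_zero]

end Aux

/-- Lemma 4.13 ii), optimality for `p > 2`: for `f = X^{1+2p^s} - X^{2+p^s}` one has
`S(f) = 𝔽_{p^s} = {y : y^{p^s} = y}`, so `|S(f)| = p^s` and `|G_{∞,1}(f)| = p^{s+1}`. -/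
theorem Sf_optimal_odd_char (p : ℕ) (hp : p.Prime) (hp2 : 2 < p)
    (k : Type*) [Field k] [IsAlgClosed k] [CharP k p]
    (s : ℕ) (hs : 1 ≤ s) (f : k[X])
    (hf : f = X ^ (1 + 2 * p ^ s) - X ^ (2 + p ^ s)) :
    Sf p f = {y : k | y ^ p ^ s = y} ∧ (Sf p f).ncard = p ^ s := by
  haveI : Fact p.Prime := ⟨hp⟩
  obtain ⟨q, hqdef⟩ : ∃ q, p ^ s = q := ⟨_, rfl⟩
  rw [hqdef] at hf ⊢
  have hq3 : 3 ≤ q := by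
    rw [← hqdef]
    calc 3 ≤ p := hp2
      _ = p ^ 1 := (pow_one p).symm
      _ ≤ p ^ s := Nat.pow_le_pow_right hp.pos hs
  -- the fundamental expansion of Δ_y f
  have Δexp : ∀ y : k, f.comp (X + C y) - f - C (f.eval y) =
      C (2 * (y ^ q - y)) * X ^ (q + 1) + C (2 * y ^ (q + 1) - y ^ 2) * X ^ q
        + C (y ^ (2 * q) - 2 * y ^ (q + 1)) * X - C (y ^ q) * X ^ 2
        + C y * X ^ (2 * q) := by
    intro y
    have hfrob : (X + C y) ^ q = X ^ q + C (y ^ q) := by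
      rw [← hqdef, add_pow_char_pow, ← C_pow]
    rw [hf, show eval y (X ^ (1 + 2 * q) - X ^ (2 + q) : k[X])
        = y ^ (1 + 2 * q) - y ^ (2 + q) by simp,
      sub_comp, pow_comp, pow_comp, X_comp]
    rw [show (X + C y) ^ (1 + 2 * q) = (X + C y) * ((X + C y) ^ q) ^ 2 by
        rw [pow_add, pow_one, mul_comm 2 q, pow_mul],
      show (X + C y) ^ (2 + q) = (X + C y) ^ 2 * (X + C y) ^ q from pow_add _ 2 q,
      hfrob]
    simp only [map_sub, map_mul, map_pow, map_ofNat]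
    ring
  -- coefficient of Δ_y f at q + 1
  have Δcoeff : ∀ y : k,
      (f.comp (X + C y) - f - C (f.eval y)).coeff (q + 1) = 2 * (y ^ q - y) := by
    intro y
    rw [Δexp y]
    simp only [coeff_add, coeff_sub, coeff_C_mul, coeff_X_pow, coeff_X,
      mul_ite, mul_one, mul_zero]
    split_ifs <;> first | ring1 | (exfalso; omega)
  -- vanishing of high coefficients of Δ_y f
  have Δhigh : ∀ (y : k) (n : ℕ), 2 * q + 2 ≤ n →
      (f.comp (X + C y) - f - C (f.eval y)).coeff n = 0 := by
    intro y n hn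
    rw [Δexp y]
    simp only [coeff_add, coeff_sub, coeff_C_mul, coeff_X_pow, coeff_X,
      mul_ite, mul_one, mul_zero]
    split_ifs <;> first | ring1 | (exfalso; omega)
  -- the set identification
  have hSet : Sf p f = {y : k | y ^ q = y} := by
    ext y
    constructor
    · rintro ⟨P, -, hP⟩
      have h0 : (P - P ^ p).coeff (q + 1) = 0 := by
        refine coeff_sub_pow_char_eq_zero P (q + 1) ?_ ?_
        · intro hdvd
          have hq' : p ∣ q := hqdef ▸ dvd_pow_self p (by omega)
          have h1 : (q + 1) - q = 1 := by omega
          have hd1 : p ∣ 1 := h1 ▸ Nat.dvd_sub hdvd hq'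
          exact absurd (Nat.le_of_dvd one_pos hd1) (by omega)
        · intro t ht
          rw [← hP]
          refine Δhigh y _ ?_
          have h1 : p ≤ p ^ t := by
            calc p = p ^ 1 := (pow_one p).symm
              _ ≤ p ^ t := Nat.pow_le_pow_right hp.pos ht
          calc 2 * q + 2 ≤ (q + 1) * p := by nlinarith
            _ ≤ (q + 1) * p ^ t := Nat.mul_le_mul_left _ h1
      rw [← hP, Δcoeff y] at h0
      have h2 : (2 : k) ≠ 0 := by
        have hn : ((2 : ℕ) : k) ≠ 0 := by
          rw [Ne, CharP.cast_eq_zero_iff k p 2]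
          intro hdvd
          exact absurd (Nat.le_of_dvd (by norm_num) hdvd) (by omega)
        simpa using hn
      have := mul_eq_zero.mp h0
      rcases this with h | h
      · exact absurd h h2
      · exact sub_eq_zero.mp h
    · intro hy
      simp only [Set.mem_setOf_eq] at hy
      set h : k[X] := C (y ^ 2) * X + C y * X ^ 2 with hh
      refine ⟨∑ t ∈ Finset.range s, -(h ^ p ^ t), ?_, ?_⟩
      · rw [coeff_zero_eq_eval_zero, eval_finset_sum]
        refine Finset.sum_eq_zero fun t _ => ?_
        simp [hh, zero_pow (pow_ne_zero t hp.ne_zero)]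
      · have hsum : (∑ t ∈ Finset.range s, -(h ^ p ^ t))
            - (∑ t ∈ Finset.range s, -(h ^ p ^ t)) ^ p = h ^ q - h := by
          rw [sum_pow_char]
          have hodd : ∀ t : ℕ, (-(h ^ p ^ t)) ^ p = -(h ^ p ^ (t + 1)) := fun t => by
            rw [(hp.odd_of_ne_two (by omega)).neg_pow, ← pow_mul, ← pow_succ]
          simp_rw [hodd]
          rw [← Finset.sum_sub_distrib]
          simp_rw [neg_sub_neg]
          rw [Finset.sum_range_sub (fun t => h ^ p ^ t), pow_zero, pow_one, hqdef]
        rw [hsum, Δexp y]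
        have hpow : h ^ q = C (y ^ 2) * X ^ q + C y * (X ^ 2) ^ q := by
          rw [hh, ← hqdef, add_pow_char_pow, mul_pow, mul_pow, ← C_pow, ← C_pow,
            show (y ^ 2) ^ p ^ s = y ^ 2 by
              rw [← pow_mul, mul_comm, pow_mul, hqdef, hy],
            show y ^ p ^ s = y by rw [hqdef]; exact hy]
        rw [hpow, hh]
        rw [show y ^ (q + 1) = y ^ 2 by rw [pow_succ, hy, sq],
          show y ^ (2 * q) = y ^ 2 by rw [two_mul, pow_add, hy, sq], hy]
        rw [show (2 : k) * y ^ 2 - y ^ 2 = y ^ 2 by ring]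
        rw [show y ^ 2 - 2 * y ^ 2 = -(y ^ 2) by ring]
        rw [show (X ^ 2 : k[X]) ^ q = X ^ (2 * q) by rw [← pow_mul]]
        rw [show (2 : k) * (y - y) = 0 by ring, C_0, zero_mul]
        simp only [map_neg]
        ring
  refine ⟨hSet, ?_⟩
  rw [hSet]
  -- cardinality of the fixed field of the s-th Frobenius
  have hdeg : (X ^ q - X : k[X]).natDegree = q := by
    rw [natDegree_sub_eq_left_of_natDegree_lt, natDegree_X_pow]
    rw [natDegree_X, natDegree_X_pow]; omega
  have hne : (X ^ q - X : k[X]) ≠ 0 := fun h => by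
    rw [h, natDegree_zero] at hdeg; omega
  have hroot : {y : k | y ^ q = y} = (X ^ q - X : k[X]).rootSet k := by
    ext y
    rw [mem_rootSet]
    simp [hne, sub_eq_zero]
  have hsep : (X ^ q - X : k[X]).Separable :=
    galois_poly_separable p q (hqdef ▸ dvd_pow_self p (by omega))
  have hcard := card_rootSet_eq_natDegree hsep
    (IsAlgClosed.splits ((X ^ q - X : k[X]).map (algebraMap k k)))
  rw [hroot, ← Nat.card_coe_set_eq, Nat.card_eq_fintype_card, hcard, hdeg]
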